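/- Let T be a measure-preserving transformation of a probability space (E, ℰ, π), K a regular conditional kernel of X given T(X), and for n ∈ ℕ let A_n = {x ∈ E : K^n(x,G) > 0} for a fixed measurable set G. Then for every n, A_n ⊆ T^{-1}(A_{n+1}) up to a π-null set; in particular the sequence (π(A_n))_{n∈ℕ} is nondecreasing. Moreover, G is 'atteignable' (for every η > 0 there exist n and a probability ν ≪ π with T^n(ν) = π and ν(G) > 1−η) if and only if sup_n π(A_n) = 1. -/

import Mathlib

open MeasureTheory ProbabilityTheory
open scoped ENNReal

/-- Iterated (n-step) transition kernel. -/
noncomputable def kpow {E : Type*} [MeasurableSpace E] (K : Kernel E E) : ℕ → Kernel E E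
  | 0 => Kernel.id
  | n + 1 => (kpow K n).comp K

section Aux

variable {E : Type*} [MeasurableSpace E]

instance kpow_isMarkovKernel (K : Kernel E E) [IsMarkovKernel K] (n : ℕ) :
    IsMarkovKernel (kpow K n) := by
  induction n with
  | zero => exact (inferInstance : IsMarkovKernel (Kernel.id : Kernel E E))
  | succ n ih => exact (inferInstance : IsMarkovKernel ((kpow K n).comp K))

/-- The fundamental disintegration identity iterated `n` times. -/
theorem kpow_map_iterate (π : Measure E) [IsProbabilityMeasure π]
    (T : E → E) (hTm : Measurable T)
    (K : Kernel E E) [IsMarkovKernel K]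
    (hK : π.map (fun x => (T x, x)) = π ⊗ₘ K) (n : ℕ) :
    π.map (fun x => (T^[n] x, x)) = π ⊗ₘ kpow K n := by
  induction n with
  | zero =>
    ext s hs
    simp only [Function.iterate_zero_apply]
    rw [Measure.map_apply (show Measurable fun x : E => (x, x) from measurable_id.prodMk measurable_id) hs,
      Measure.compProd_apply hs]
    have : ∀ a : E, (kpow K 0) a (Prod.mk a ⁻¹' s)
        = ((fun x : E => (x, x)) ⁻¹' s).indicator (fun _ => (1 : ℝ≥0∞)) a := by
      intro a
      show (Kernel.id : Kernel E E) a (Prod.mk a ⁻¹' s) = _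
      rw [Kernel.id_apply, Measure.dirac_apply' _ (measurable_prodMk_left hs)]
      by_cases hmem : (a, a) ∈ s
      · rw [Set.indicator_of_mem (Set.mem_preimage.mpr hmem)]
        exact (Set.indicator_of_mem
          (show a ∈ (fun x : E => (x, x)) ⁻¹' s from hmem) _).symm
      · rw [Set.indicator_of_notMem (fun h => hmem (Set.mem_preimage.mp h))]
        exact (Set.indicator_of_notMem
          (show a ∉ (fun x : E => (x, x)) ⁻¹' s from fun h => hmem h) _).symm
    rw [lintegral_congr this, lintegral_indicator ((show Measurable fun x : E => (x, x) from measurable_id.prodMk measurable_id) hs)]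
    simp
  | succ n ih =>
    ext s hs
    have hTn : Measurable (T^[n]) := hTm.iterate n
    have hs' : MeasurableSet ((fun p : E × E => (T p.1, p.2)) ⁻¹' s) :=
      ((hTm.comp measurable_fst).prodMk measurable_snd) hs
    -- LHS
    have hL : π.map (fun x => (T^[n + 1] x, x)) s
        = ∫⁻ z, (kpow K n) z {w | (T z, w) ∈ s} ∂π := by
      rw [Measure.map_apply (show Measurable fun x => (T^[n + 1] x, x) from (hTm.iterate (n + 1)).prodMk measurable_id) hs]
      have hpre : (fun x => (T^[n + 1] x, x)) ⁻¹' s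
          = (fun x => (T^[n] x, x)) ⁻¹' ((fun p : E × E => (T p.1, p.2)) ⁻¹' s) := by
        ext x
        simp [Function.iterate_succ_apply']
      rw [hpre, ← Measure.map_apply (show Measurable fun x => (T^[n] x, x) from hTn.prodMk measurable_id) hs', ih,
        Measure.compProd_apply hs']
      rfl
    -- RHS
    have hR : (π ⊗ₘ kpow K (n + 1)) s
        = ∫⁻ x, (kpow K n) x {w | (T x, w) ∈ s} ∂π := by
      rw [Measure.compProd_apply hs]
      have h1 : ∀ z : E, (kpow K (n + 1)) z (Prod.mk z ⁻¹' s)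
          = ∫⁻ y, (kpow K n) y (Prod.mk z ⁻¹' s) ∂(K z) := by
        intro z
        exact Kernel.comp_apply' _ _ _ (measurable_prodMk_left hs)
      rw [lintegral_congr h1]
      -- turn the double integral into an integral over `π ⊗ₘ K`
      have hF : Measurable (fun p : E × E => (kpow K n) p.2 (Prod.mk p.1 ⁻¹' s)) := by
        have ht : MeasurableSet {q : (E × E) × E | (q.1.1, q.2) ∈ s} :=
          ((measurable_fst.fst).prodMk measurable_snd) hs
        have := Kernel.measurable_kernel_prodMk_left
          (κ := (kpow K n).comap Prod.snd measurable_snd) ht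
        simp only [Kernel.comap_apply] at this
        exact this
      rw [← Measure.lintegral_compProd hF, ← hK,
        lintegral_map hF (show Measurable fun x => (T x, x) from hTm.prodMk measurable_id)]
      rfl
    rw [hL, hR]

/-- Core null-set lemma: a.e. `x ∈ B`, the kernel at `h x` does not vanish on `B`. -/
theorem null_aux (π : Measure E) [IsProbabilityMeasure π]
    (h : E → E) (hh : Measurable h)
    (κ : Kernel E E) [IsMarkovKernel κ]
    (hmap : π.map (fun x => (h x, x)) = π ⊗ₘ κ)
    {B : Set E} (hB : MeasurableSet B) :
    π {x | x ∈ B ∧ κ (h x) B = 0} = 0 := by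
  set s : Set (E × E) := {p | κ p.1 B = 0 ∧ p.2 ∈ B} with hsdef
  have hs : MeasurableSet s := by
    have h1 : MeasurableSet {p : E × E | κ p.1 B = 0} :=
      ((Kernel.measurable_coe κ hB).comp measurable_fst) (measurableSet_singleton 0)
    exact h1.inter (measurable_snd hB)
  have hmapped : π {x | x ∈ B ∧ κ (h x) B = 0} = π.map (fun x => (h x, x)) s := by
    rw [Measure.map_apply (show Measurable fun x => (h x, x) from hh.prodMk measurable_id) hs]
    congr 1
    ext x
    simp [hsdef, and_comm]
  rw [hmapped, hmap, Measure.compProd_apply hs]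
  have : ∀ z : E, κ z (Prod.mk z ⁻¹' s) = 0 := by
    intro z
    by_cases h0 : κ z B = 0
    · have : Prod.mk z ⁻¹' s = B := by ext w; simp [hsdef, h0]
      rw [this, h0]
    · have : Prod.mk z ⁻¹' s = ∅ := by ext w; simp [hsdef, h0]
      rw [this, measure_empty]
  simp [this]

end Aux

/-- with `A n = {x | K^n(x,G) > 0}`, one has `A n ⊆ T⁻¹ (A (n+1))` up to a
π-null set, so `n ↦ π (A n)` is nondecreasing; and `G` is attainable (for every `η > 0`
there are `n` and a probability `ν ≪ π` with `(T^[n])_* ν = π` and `ν G > 1 - η`) iff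
`⨆ n, π (A n) = 1`. -/
theorem attainable_iff_strongly_accessible
    {E : Type*} [MeasurableSpace E] [StandardBorelSpace E]
    (π : Measure E) [IsProbabilityMeasure π]
    (T : E → E) (hTm : Measurable T) (hT : MeasurePreserving T π π)
    (K : Kernel E E) [IsMarkovKernel K]
    (hK : π.map (fun x => (T x, x)) = π ⊗ₘ K)
    (G : Set E) (hG : MeasurableSet G) :
    (∀ n : ℕ, ∀ᵐ x ∂π,
      x ∈ {y : E | 0 < kpow K n y G} → T x ∈ {y : E | 0 < kpow K (n + 1) y G}) ∧
    Monotone (fun n : ℕ => π {y : E | 0 < kpow K n y G}) ∧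
    ((∀ η : ℝ≥0∞, 0 < η →
        ∃ (n : ℕ) (ν : Measure E), IsProbabilityMeasure ν ∧ ν ≪ π ∧
          ν.map (T^[n]) = π ∧ 1 - η < ν G) ↔
      (⨆ n : ℕ, π {y : E | 0 < kpow K n y G}) = 1) := by
  classical
  set A : ℕ → Set E := fun n => {y : E | 0 < kpow K n y G} with hAdef
  have hfnm : ∀ n, Measurable (fun y => kpow K n y G) := fun n => Kernel.measurable_coe _ hG
  have hA : ∀ n, MeasurableSet (A n) := fun n =>
    measurableSet_lt measurable_const (hfnm n)
  have hKn : ∀ n, π.map (fun x => (T^[n] x, x)) = π ⊗ₘ kpow K n :=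
    kpow_map_iterate π T hTm K hK
  -- marginal identity
  have marg : ∀ (n : ℕ) (B : Set E), MeasurableSet B →
      ∫⁻ z, kpow K n z B ∂π = π B := by
    intro n B hB
    have h1 : (π ⊗ₘ kpow K n) (Set.univ ×ˢ B) = ∫⁻ z, kpow K n z B ∂π := by
      rw [Measure.compProd_apply (MeasurableSet.univ.prod hB)]
      congr 1
      ext z
      congr 1
      ext w
      simp
    have h2 : π.map (fun x => (T^[n] x, x)) (Set.univ ×ˢ B) = π B := by
      rw [Measure.map_apply (show Measurable fun x => (T^[n] x, x) from (hTm.iterate n).prodMk measurable_id)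
        (MeasurableSet.univ.prod hB)]
      congr 1
      ext x
      simp
    rw [← h1, ← hKn n, h2]
  -- step lemma
  have step : ∀ (n : ℕ) (z : E), K z (A n) ≠ 0 → 0 < kpow K (n + 1) z G := by
    intro n z hz
    rw [pos_iff_ne_zero]
    intro h0
    have h0' : ∫⁻ y, kpow K n y G ∂(K z) = 0 := by
      rw [← Kernel.comp_apply' _ _ _ hG]
      exact h0
    have hae : (fun y => kpow K n y G) =ᵐ[K z] 0 :=
      (lintegral_eq_zero_iff (hfnm n)).mp h0'
    have : K z (A n) = 0 := by
      have hsub : A n ⊆ {y | ¬ (fun y => kpow K n y G) y = (0 : E → ℝ≥0∞) y} := by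
        intro y hy
        exact ne_of_gt hy
      exact measure_mono_null hsub hae
    exact hz this
  -- Part 1
  have part1 : ∀ n : ℕ, ∀ᵐ x ∂π, x ∈ A n → T x ∈ A (n + 1) := by
    intro n
    have h0 : π {x | x ∈ A n ∧ K (T x) (A n) = 0} = 0 := null_aux π T hTm K hK (hA n)
    have h0' : ∀ᵐ x ∂π, x ∉ {x | x ∈ A n ∧ K (T x) (A n) = 0} :=
      measure_eq_zero_iff_ae_notMem.mp h0
    filter_upwards [h0'] with x hx hxA
    exact step n (T x) fun h => hx ⟨hxA, h⟩
  -- Part 2 : monotonicity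
  have part2 : Monotone (fun n : ℕ => π (A n)) := by
    apply monotone_nat_of_le_succ
    intro n
    have hle : π (A n) ≤ π (T ⁻¹' A (n + 1)) := by
      apply measure_mono_ae
      filter_upwards [part1 n] with x hx hxA
      exact hx hxA
    calc π (A n) ≤ π (T ⁻¹' A (n + 1)) := hle
      _ = π (A (n + 1)) := hT.measure_preimage (hA (n + 1)).nullMeasurableSet
  refine ⟨part1, part2, ?_, ?_⟩
  -- forward: attainable → sup = 1
  · intro hatt
    refine le_antisymm (iSup_le fun n => prob_le_one) ?_
    by_contra hlt
    push_neg at hlt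
    set s := ⨆ n : ℕ, π (A n) with hs
    have hs1 : s ≤ 1 := iSup_le fun n => prob_le_one
    have hη : 0 < 1 - s := tsub_pos_of_lt hlt
    obtain ⟨n, ν, hprob, hac, hmapν, hνG⟩ := hatt (1 - s) hη
    have hsub : 1 - (1 - s) = s := ENNReal.sub_sub_cancel (by simp) hs1
    rw [hsub] at hνG
    -- a.e. x ∈ G, T^[n] x ∈ A n
    have hGA : ∀ᵐ x ∂π, x ∈ G → T^[n] x ∈ A n := by
      have h0 : π {x | x ∈ G ∧ kpow K n (T^[n] x) G = 0} = 0 :=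
        null_aux π (T^[n]) (hTm.iterate n) (kpow K n) (hKn n) hG
      have h0' : ∀ᵐ x ∂π, x ∉ {x | x ∈ G ∧ kpow K n (T^[n] x) G = 0} :=
        measure_eq_zero_iff_ae_notMem.mp h0
      filter_upwards [h0'] with x hx hxG
      have : kpow K n (T^[n] x) G ≠ 0 := fun h => hx ⟨hxG, h⟩
      exact pos_iff_ne_zero.mpr this
    have hGA' : ∀ᵐ x ∂ν, x ∈ G → T^[n] x ∈ A n := hac.ae_le hGA
    have h1 : ν G ≤ ν (T^[n] ⁻¹' A n) := by
      apply measure_mono_ae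
      filter_upwards [hGA'] with x hx hxG
      exact hx hxG
    have h2 : ν (T^[n] ⁻¹' A n) = π (A n) := by
      rw [← Measure.map_apply (hTm.iterate n) (hA n), hmapν]
    have h3 : π (A n) ≤ s := le_iSup (fun n => π (A n)) n
    exact absurd (hνG.trans_le ((h1.trans h2.le).trans h3)) (lt_irrefl s)
  -- backward: sup = 1 → attainable
  · intro hsup η hη
    have hlt1 : (1 : ℝ≥0∞) - η < 1 := ENNReal.sub_lt_self ENNReal.one_ne_top one_ne_zero hη.ne'
    have hlt1' : 1 - η < ⨆ n : ℕ, π (A n) := by rw [hsup]; exact hlt1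
    obtain ⟨n, hn⟩ := lt_iSup_iff.mp hlt1'
    -- the kernel used to build ν
    set f : E → Measure E := fun z =>
      if 0 < kpow K n z G then (kpow K n z)[|G] else kpow K n z with hfdef
    have hfle : ∀ z (t : Set E), kpow K n z t = 0 → f z t = 0 := by
      intro z t hzt
      rw [hfdef]
      simp only
      split_ifs with h
      · rw [ProbabilityTheory.cond_apply hG]
        have : kpow K n z (G ∩ t) = 0 :=
          measure_mono_null Set.inter_subset_right hzt
        rw [this, mul_zero]
      · exact hzt
    have hfprob : ∀ z, IsProbabilityMeasure (f z) := by
      intro z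
      rw [hfdef]
      simp only
      split_ifs with h
      · exact ProbabilityTheory.cond_isProbabilityMeasure h.ne'
      · infer_instance
    have hfm : Measurable f := by
      apply Measure.measurable_measure.mpr
      intro t ht
      have : (fun z => f z t) = fun z =>
          if 0 < kpow K n z G then (kpow K n z G)⁻¹ * kpow K n z (G ∩ t)
          else kpow K n z t := by
        funext z
        rw [hfdef]
        simp only
        split_ifs with h
        · rw [ProbabilityTheory.cond_apply hG]
        · rfl
      rw [this]
      exact Measurable.ite (hA n) (((hfnm n).inv).mul (Kernel.measurable_coe _ (hG.inter ht)))
        (Kernel.measurable_coe _ ht)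
    set ν : Measure E := π.bind f with hνdef
    have hbind : ∀ t : Set E, MeasurableSet t → ν t = ∫⁻ z, f z t ∂π := by
      intro t ht
      rw [hνdef]
      exact Measure.bind_apply ht hfm.aemeasurable
    have hνprob : IsProbabilityMeasure ν := by
      constructor
      rw [hbind _ MeasurableSet.univ]
      have : ∀ z, f z Set.univ = 1 := fun z => (hfprob z).measure_univ
      simp [this]
    have hνac : ν ≪ π := by
      apply Measure.AbsolutelyContinuous.mk
      intro t ht ht0
      have hzero : ∫⁻ z, kpow K n z t ∂π = 0 := by rw [marg n t ht, ht0]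
      have hae : (fun z => kpow K n z t) =ᵐ[π] 0 :=
        (lintegral_eq_zero_iff (Kernel.measurable_coe _ ht)).mp hzero
      rw [hbind t ht]
      rw [lintegral_eq_zero_iff]
      · filter_upwards [hae] with z hz
        exact hfle z t hz
      · exact Measure.measurable_measure.mp hfm t ht
    -- the graph support
    have hD : ∀ z : E, MeasurableSet {w : E | T^[n] w = z} := by
      intro z
      exact (hTm.iterate n) (measurableSet_singleton z)
    have hDset : MeasurableSet {p : E × E | T^[n] p.2 = p.1} := by
      letI := upgradeStandardBorel E
      exact StronglyMeasurable.measurableSet_eq_fun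
        (show Measurable fun p : E × E => T^[n] p.2 from
          (hTm.iterate n).comp measurable_snd).stronglyMeasurable
        measurable_fst.stronglyMeasurable
    have hgraph : ∀ᵐ z ∂π, kpow K n z {w | T^[n] w = z} = 1 := by
      have h0 : π.map (fun x => (T^[n] x, x)) {p : E × E | T^[n] p.2 = p.1}ᶜ = 0 := by
        rw [Measure.map_apply (show Measurable fun x => (T^[n] x, x) from (hTm.iterate n).prodMk measurable_id) hDset.compl]
        convert measure_empty (μ := π)
        ext x
        simp
      rw [hKn n, Measure.compProd_apply hDset.compl] at h0
      have h1 : ∀ᵐ z ∂π, kpow K n z (Prod.mk z ⁻¹' {p : E × E | T^[n] p.2 = p.1}ᶜ) = 0 :=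
        (lintegral_eq_zero_iff (Kernel.measurable_kernel_prodMk_left hDset.compl)).mp h0
      filter_upwards [h1] with z hz
      have : (Prod.mk z ⁻¹' {p : E × E | T^[n] p.2 = p.1}ᶜ) = {w | T^[n] w = z}ᶜ := rfl
      rw [this] at hz
      exact (prob_compl_eq_zero_iff (hD z)).mp hz
    have hνmap : ν.map (T^[n]) = π := by
      ext t ht
      rw [Measure.map_apply (hTm.iterate n) ht, hbind _ ((hTm.iterate n) ht)]
      have hcongr : ∀ᵐ z ∂π, f z (T^[n] ⁻¹' t) = t.indicator (fun _ => (1 : ℝ≥0∞)) z := by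
        filter_upwards [hgraph] with z hz
        haveI := hfprob z
        have hzc : f z {w | T^[n] w = z}ᶜ = 0 :=
          hfle z _ ((prob_compl_eq_zero_iff (hD z)).mpr hz)
        have hz1 : f z {w | T^[n] w = z} = 1 := (prob_compl_eq_zero_iff (hD z)).mp hzc
        by_cases hzt : z ∈ t
        · have hsub : {w | T^[n] w = z} ⊆ T^[n] ⁻¹' t := by
            intro w hw
            simp only [Set.mem_setOf_eq] at hw
            simp [Set.mem_preimage, hw, hzt]
          have : (1 : ℝ≥0∞) ≤ f z (T^[n] ⁻¹' t) := hz1 ▸ measure_mono hsub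
          have h2 : f z (T^[n] ⁻¹' t) ≤ 1 := prob_le_one
          simp [Set.indicator_of_mem hzt, le_antisymm h2 this]
        · have hsub : T^[n] ⁻¹' t ⊆ {w | T^[n] w = z}ᶜ := by
            intro w hw hwz
            simp only [Set.mem_setOf_eq] at hwz
            rw [Set.mem_preimage, hwz] at hw
            exact hzt hw
          have : f z (T^[n] ⁻¹' t) = 0 :=
            le_antisymm (hzc ▸ measure_mono hsub) zero_le
          simp [Set.indicator_of_notMem hzt, this]
      rw [lintegral_congr_ae hcongr, lintegral_indicator ht]
      simp
    have hνG : ν G = π (A n) := by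
      rw [hbind G hG]
      have : ∀ z, f z G = (A n).indicator (fun _ => (1 : ℝ≥0∞)) z := by
        intro z
        rw [hfdef]
        simp only
        split_ifs with h
        · rw [ProbabilityTheory.cond_apply hG, Set.inter_self,
            ENNReal.inv_mul_cancel h.ne' (measure_ne_top _ _)]
          exact (Set.indicator_of_mem (show z ∈ A n from h) (fun _ => (1 : ℝ≥0∞))).symm
        · have h0 : kpow K n z G = 0 := by simpa using not_lt.mp h
          rw [h0]
          exact (Set.indicator_of_notMem (show z ∉ A n from h) (fun _ => (1 : ℝ≥0∞))).symm
      rw [lintegral_congr this, lintegral_indicator (hA n)]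
      simp
    exact ⟨n, ν, hνprob, hνac, hνmap, hνG ▸ hn⟩
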